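/- (Gradient norm decomposition, convex case.) Let f_1, …, f_n : ℝ^d → ℝ be convex and L-smooth, let f = (1/n)∑_{i=1}^n f_i, and let x* be a global minimizer of f. Then for any points x_1, …, x_n ∈ ℝ^d with average x̄ = (1/n)∑_i x_i, ∑_{i=1}^n ‖∇f_i(x_i)‖² ≤ 3·L²·∑_{i=1}^n ‖x_i − x̄‖² + 6·n·L·(f(x̄) − f(x*)) + 3·n·b², where b² = (1/n)∑_{i=1}^n ‖∇f_i(x*)‖². -/

import Mathlib

open Finset InnerProductSpace Set

local notation "⟪" x ", " y "⟫" => @inner ℝ _ _ x y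

section aux
variable {F : Type*} [NormedAddCommGroup F] [InnerProductSpace ℝ F] [CompleteSpace F]

lemma line_hasDerivAt (g : F → ℝ) (G : F → F) (hg : ∀ z, HasGradientAt g (G z) z)
    (a v : F) (t : ℝ) :
    HasDerivAt (fun s : ℝ => g (a + s • v)) ⟪G (a + t • v), v⟫ t := by
  have hline : HasDerivAt (fun s : ℝ => a + s • v) v t := by
    simpa using ((hasDerivAt_id t).smul_const v).const_add a
  have h := ((hg (a + t • v)).hasFDerivAt.comp_hasDerivAt t hline)
  simpa [toDual_apply_apply, Function.comp_def] using h

lemma convex_first_order (g : F → ℝ) (G : F → F) (hg : ∀ z, HasGradientAt g (G z) z)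
    (hconv : ConvexOn ℝ univ g) (x y : F) :
    g x + ⟪G x, y - x⟫ ≤ g y := by
  have hφconv : ConvexOn ℝ univ (g ∘ (AffineMap.lineMap x y : ℝ →ᵃ[ℝ] F)) := by
    simpa using hconv.comp_affineMap (AffineMap.lineMap x y)
  have heq : (g ∘ (AffineMap.lineMap x y : ℝ →ᵃ[ℝ] F)) = fun t : ℝ => g (x + t • (y - x)) := by
    funext t; simp only [Function.comp_apply, AffineMap.lineMap_apply_module]
    congr 1; module
  rw [heq] at hφconv
  have hder : HasDerivAt (fun t : ℝ => g (x + t • (y - x))) ⟪G x, y - x⟫ 0 := by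
    simpa using line_hasDerivAt g G hg x (y - x) 0
  have hs := hφconv.le_slope_of_hasDerivAt (mem_univ (0:ℝ)) (mem_univ (1:ℝ)) one_pos hder
  simp [slope_def_field] at hs
  linarith

lemma descent (g : F → ℝ) (G : F → F) (hg : ∀ z, HasGradientAt g (G z) z)
    (L : ℝ) (hL : 0 ≤ L) (hs : ∀ y z, ‖G y - G z‖ ≤ L * ‖y - z‖) (z y : F) :
    g y ≤ g z + ⟪G z, y - z⟫ + L / 2 * ‖y - z‖ ^ 2 := by
  set v := y - z with hv
  have hG_cont : Continuous G := by
    refine (LipschitzWith.of_dist_le_mul (K := L.toNNReal) ?_).continuous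
    intro a b; rw [dist_eq_norm, dist_eq_norm]
    simpa [Real.coe_toNNReal L hL] using hs a b
  have hder : ∀ t : ℝ, HasDerivAt (fun s => g (z + s • v)) ⟪G (z + t • v), v⟫ t :=
    line_hasDerivAt g G hg z v
  have hcont : Continuous fun t : ℝ => ⟪G (z + t • v), v⟫ :=
    (hG_cont.comp (by continuity)).inner continuous_const
  have key : (∫ t in (0:ℝ)..1, ⟪G (z + t • v), v⟫) = g (z + (1:ℝ) • v) - g (z + (0:ℝ) • v) :=
    intervalIntegral.integral_eq_sub_of_hasDerivAt (fun t _ => hder t)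
      (hcont.intervalIntegrable 0 1)
  have hbound : (∫ t in (0:ℝ)..1, ⟪G (z + t • v), v⟫)
      ≤ ∫ t in (0:ℝ)..1, (⟪G z, v⟫ + L * ‖v‖ ^ 2 * t) := by
    apply intervalIntegral.integral_mono_on (by norm_num) (hcont.intervalIntegrable 0 1)
      (Continuous.intervalIntegrable (by continuity) 0 1)
    intro t ht
    have h1 : ⟪G (z + t • v) - G z, v⟫ ≤ ‖G (z + t • v) - G z‖ * ‖v‖ :=
      real_inner_le_norm _ _
    have h2 : ‖G (z + t • v) - G z‖ ≤ L * (t * ‖v‖) := by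
      have := hs (z + t • v) z
      simpa [norm_smul, abs_of_nonneg ht.1] using this
    have h3 : ⟪G (z + t • v), v⟫ = ⟪G z, v⟫ + ⟪G (z + t • v) - G z, v⟫ := by
      rw [inner_sub_left]; ring
    have hvn : (0:ℝ) ≤ ‖v‖ := norm_nonneg _
    nlinarith [mul_le_mul_of_nonneg_right h2 hvn]
  have hrhs : (∫ t in (0:ℝ)..1, (⟪G z, v⟫ + L * ‖v‖ ^ 2 * t))
      = ⟪G z, v⟫ + L * ‖v‖ ^ 2 / 2 := by
    rw [intervalIntegral.integral_add (intervalIntegrable_const)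
      (Continuous.intervalIntegrable (by continuity) 0 1)]
    rw [intervalIntegral.integral_const, intervalIntegral.integral_const_mul, integral_id]
    norm_num
    ring
  have : g (z + (1:ℝ) • v) - g (z + (0:ℝ) • v) ≤ ⟪G z, v⟫ + L * ‖v‖ ^ 2 / 2 := by
    rw [← key, ← hrhs] at *; exact hbound
  simp only [one_smul, zero_smul, add_zero, hv] at this
  have hy : z + (y - z) = y := by abel
  rw [hy] at this
  linarith

lemma cocoercive (g : F → ℝ) (G : F → F) (hg : ∀ z, HasGradientAt g (G z) z)
    (hconv : ConvexOn ℝ univ g)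
    (L : ℝ) (hL : 0 < L) (hs : ∀ y z, ‖G y - G z‖ ≤ L * ‖y - z‖) (x y : F) :
    ‖G y - G x‖ ^ 2 ≤ 2 * L * (g y - g x - ⟪G x, y - x⟫) := by
  set h : F → ℝ := fun z => g z - ⟪G x, z⟫ with hh
  set H : F → F := fun z => G z - G x with hH
  have hHg : ∀ z, HasGradientAt h (H z) z := by
    intro z
    have h1 : HasFDerivAt (fun w : F => ⟪G x, w⟫) (toDual ℝ F (G x)) z := by
      exact (toDual ℝ F (G x)).hasFDerivAt (x := z)
    have h2 := (hg z).hasFDerivAt.sub h1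
    rw [hasGradientAt_iff_hasFDerivAt]
    have hH' : toDual ℝ F (H z) = toDual ℝ F (G z) - toDual ℝ F (G x) := by
      simp [hH]
    rw [hH']
    exact h2
  have hhconv : ConvexOn ℝ univ h := by
    refine hconv.add ⟨convex_univ, ?_⟩
    intro a _ b _ p q hp hq hpq
    simp only [inner_add_right, inner_smul_right, smul_eq_mul]
    ring_nf
    exact le_of_eq (by ring)
  have hHs : ∀ a c : F, ‖H a - H c‖ ≤ L * ‖a - c‖ := by
    intro a c
    simpa [hH, sub_sub_sub_cancel_right] using hs a c
  have hmin : ∀ z, h x ≤ h z := by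
    intro z
    have := convex_first_order h H hHg hhconv x z
    simpa [hH, sub_self, inner_zero_left] using this
  have hd := descent h H hHg L hL.le hHs y (y - L⁻¹ • H y)
  have hsub : y - L⁻¹ • H y - y = -(L⁻¹ • H y) := by abel
  rw [hsub] at hd
  have hinner : ⟪H y, -(L⁻¹ • H y)⟫ = -(L⁻¹ * ‖H y‖ ^ 2) := by
    rw [inner_neg_right, real_inner_smul_right, real_inner_self_eq_norm_sq]
  have hnrm : ‖-(L⁻¹ • H y)‖ ^ 2 = L⁻¹ ^ 2 * ‖H y‖ ^ 2 := by
    rw [norm_neg, norm_smul, norm_inv, Real.norm_eq_abs, abs_of_pos hL]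
    ring
  rw [hinner, hnrm] at hd
  have hm := hmin (y - L⁻¹ • H y)
  have hdiff : h y - h x = g y - g x - ⟪G x, y - x⟫ := by
    simp [hh, inner_sub_right]; ring
  have hLne : L ≠ 0 := hL.ne'
  have : L⁻¹ * ‖H y‖ ^ 2 - L / 2 * (L⁻¹ ^ 2 * ‖H y‖ ^ 2) ≤ h y - h x := by linarith
  have hsimp : L⁻¹ * ‖H y‖ ^ 2 - L / 2 * (L⁻¹ ^ 2 * ‖H y‖ ^ 2) = ‖H y‖ ^ 2 / (2 * L) := by
    field_simp; ring
  rw [hsimp] at this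
  rw [← hdiff]
  rw [div_le_iff₀ (by positivity)] at this
  calc ‖G y - G x‖ ^ 2 = ‖H y‖ ^ 2 := by rw [hH]
    _ ≤ (h y - h x) * (2 * L) := this
    _ = 2 * L * (h y - h x) := by ring

end aux

open InnerProductSpace in
/-- **Gradient norm decomposition, convex case.**
Let `f₁, …, fₙ : ℝ^d → ℝ` be convex and `L`-smooth, `f = (1/n) ∑ fᵢ`, and `x*` a global
minimizer of `f`.  Then for any points `x₁, …, xₙ` with average `x̄`,
`∑ᵢ ‖∇fᵢ(xᵢ)‖² ≤ 3L² ∑ᵢ ‖xᵢ − x̄‖² + 6nL (f(x̄) − f(x*)) + 3n b²`,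
where `b² = (1/n) ∑ᵢ ‖∇fᵢ(x*)‖²`. -/
theorem gradient_norm_decomposition_convex
    (d n : ℕ) (hn : 0 < n)
    (f : Fin n → EuclideanSpace ℝ (Fin d) → ℝ)
    (grad : Fin n → EuclideanSpace ℝ (Fin d) → EuclideanSpace ℝ (Fin d))
    (L : ℝ) (hL : 0 < L)
    (hdiff : ∀ i z, HasGradientAt (f i) (grad i z) z)
    (hconv : ∀ i, ConvexOn ℝ Set.univ (f i))
    (hsmooth : ∀ i y z, ‖grad i y - grad i z‖ ≤ L * ‖y - z‖)
    (xstar : EuclideanSpace ℝ (Fin d))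
    (hmin : ∀ z, (n : ℝ)⁻¹ * ∑ i, f i xstar ≤ (n : ℝ)⁻¹ * ∑ i, f i z)
    (b : ℝ) (hb : b ^ 2 = (n : ℝ)⁻¹ * ∑ i, ‖grad i xstar‖ ^ 2)
    (x : Fin n → EuclideanSpace ℝ (Fin d)) :
    ∑ i, ‖grad i (x i)‖ ^ 2 ≤
      3 * L ^ 2 * ∑ i, ‖x i - (n : ℝ)⁻¹ • ∑ j, x j‖ ^ 2
      + 6 * n * L * ((n : ℝ)⁻¹ * ∑ i, f i ((n : ℝ)⁻¹ • ∑ j, x j)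
          - (n : ℝ)⁻¹ * ∑ i, f i xstar)
      + 3 * n * b ^ 2 := by
  set xb : EuclideanSpace ℝ (Fin d) := (n : ℝ)⁻¹ • ∑ j, x j with hxb
  have hnR : (0:ℝ) < n := by exact_mod_cast hn
  -- the sum of gradients vanishes at the minimizer
  have hsum0 : ∑ i, grad i xstar = 0 := by
    have hF : HasFDerivAt (fun z => ∑ i, f i z)
        (∑ i, (toDual ℝ (EuclideanSpace ℝ (Fin d)) (grad i xstar) : _ →L[ℝ] ℝ)) xstar :=
      HasFDerivAt.fun_sum fun i _ => (hdiff i xstar).hasFDerivAt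
    have hmin' : IsLocalMin (fun z => ∑ i, f i z) xstar := by
      apply Filter.Eventually.of_forall
      intro z
      exact le_of_mul_le_mul_left (hmin z) (inv_pos.mpr hnR)
    have h0 := hmin'.hasFDerivAt_eq_zero hF
    have h1 : toDual ℝ (EuclideanSpace ℝ (Fin d)) (∑ i, grad i xstar) = 0 := by
      rw [map_sum]; exact h0
    exact (toDual ℝ (EuclideanSpace ℝ (Fin d))).map_eq_zero_iff.mp h1
  have hinner0 : ∑ i, ⟪grad i xstar, xb - xstar⟫ = 0 := by
    rw [← sum_inner, hsum0, inner_zero_left]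
  -- per-term bound
  have key : ∀ i, ‖grad i (x i)‖ ^ 2 ≤
      3 * L ^ 2 * ‖x i - xb‖ ^ 2 + 3 * ‖grad i xb - grad i xstar‖ ^ 2
        + 3 * ‖grad i xstar‖ ^ 2 := by
    intro i
    have h1 : ‖grad i (x i) - grad i xb‖ ≤ L * ‖x i - xb‖ := hsmooth i _ _
    have h2 : ‖grad i (x i)‖ ≤ ‖grad i (x i) - grad i xb‖ + ‖grad i xb - grad i xstar‖
        + ‖grad i xstar‖ := by
      calc ‖grad i (x i)‖
          = ‖(grad i (x i) - grad i xb) + (grad i xb - grad i xstar) + grad i xstar‖ := by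
            congr 1; abel
        _ ≤ _ := norm_add₃_le
    have n1 := norm_nonneg (grad i (x i) - grad i xb)
    have n2 := norm_nonneg (grad i xb - grad i xstar)
    have n3 := norm_nonneg (grad i xstar)
    have n4 := norm_nonneg (grad i (x i))
    have n5 : (0:ℝ) ≤ L * ‖x i - xb‖ := by positivity
    nlinarith [sq_nonneg (‖grad i (x i) - grad i xb‖ - ‖grad i xb - grad i xstar‖),
      sq_nonneg (‖grad i (x i) - grad i xb‖ - ‖grad i xstar‖),
      sq_nonneg (‖grad i xb - grad i xstar‖ - ‖grad i xstar‖),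
      mul_self_nonneg (L * ‖x i - xb‖ - ‖grad i (x i) - grad i xb‖)]
  -- co-coercivity summed
  have hcc : ∑ i, ‖grad i xb - grad i xstar‖ ^ 2
      ≤ 2 * L * (∑ i, f i xb - ∑ i, f i xstar) := by
    have h := fun i => cocoercive (f i) (grad i) (hdiff i) (hconv i) L hL (hsmooth i) xstar xb
    calc ∑ i, ‖grad i xb - grad i xstar‖ ^ 2
        ≤ ∑ i, 2 * L * (f i xb - f i xstar - ⟪grad i xstar, xb - xstar⟫) :=
          Finset.sum_le_sum fun i _ => h i
      _ = 2 * L * (∑ i, f i xb - ∑ i, f i xstar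
            - ∑ i, ⟪grad i xstar, xb - xstar⟫) := by
          rw [← Finset.mul_sum]
          congr 1
          rw [Finset.sum_sub_distrib, Finset.sum_sub_distrib]
      _ = 2 * L * (∑ i, f i xb - ∑ i, f i xstar) := by rw [hinner0]; ring
  have hsumkey : ∑ i, ‖grad i (x i)‖ ^ 2 ≤
      3 * L ^ 2 * ∑ i, ‖x i - xb‖ ^ 2 + 3 * ∑ i, ‖grad i xb - grad i xstar‖ ^ 2
        + 3 * ∑ i, ‖grad i xstar‖ ^ 2 := by
    calc ∑ i, ‖grad i (x i)‖ ^ 2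
        ≤ ∑ i, (3 * L ^ 2 * ‖x i - xb‖ ^ 2 + 3 * ‖grad i xb - grad i xstar‖ ^ 2
            + 3 * ‖grad i xstar‖ ^ 2) := Finset.sum_le_sum fun i _ => key i
      _ = _ := by rw [Finset.sum_add_distrib, Finset.sum_add_distrib,
            ← Finset.mul_sum, ← Finset.mul_sum, ← Finset.mul_sum]
  have hb' : (n : ℝ) * b ^ 2 = ∑ i, ‖grad i xstar‖ ^ 2 := by
    rw [hb, ← mul_assoc, mul_inv_cancel₀ hnR.ne', one_mul]
  have hf' : 6 * (n:ℝ) * L * ((n : ℝ)⁻¹ * ∑ i, f i xb - (n : ℝ)⁻¹ * ∑ i, f i xstar)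
      = 6 * L * (∑ i, f i xb - ∑ i, f i xstar) := by
    field_simp
  rw [hf']
  have h3 : 3 * (n:ℝ) * b ^ 2 = 3 * ∑ i, ‖grad i xstar‖ ^ 2 := by
    rw [mul_assoc, hb']
  rw [h3]
  linarith [hsumkey, hcc]
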